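/- arXiv:2109.01433 — 4 statements merged into one kernel-verified Lean document; each statement's English description precedes it below -/
import Mathlib

section
/- Under the noise model Y = f(X) + ε, suppose for each x ∈ S×C the map ω_F ↦ f̂(ω_F, x) is square-integrable with respect to P_F, and all integrands below are integrable with respect to P ⊗ P_F. Then the expected L2-loss PFI over the model distribution satisfies ∫∫ [(Y − f̂(ω_F, (X̃_S, X_C)))² − (Y − f̂(ω_F, X))²] d(P ⊗ P_F) = E[(f(X) − m(X̃_S, X_C))²] − E[(f(X) − m(X))²] + E[v(X̃_S, X_C)] − E[v(X)]. -/
open MeasureTheory ProbabilityTheory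



lemma pfi_inner_decomp {ΩF : Type*} [MeasurableSpace ΩF] (PF : Measure ΩF)
    [IsProbabilityMeasure PF] (g : ΩF → ℝ) (hg : MemLp g 2 PF) (c : ℝ) :
    ∫ ωF, (c - g ωF) ^ 2 ∂PF
      = (c - ∫ ωF, g ωF ∂PF) ^ 2 + ∫ ωF, (g ωF - ∫ ωF', g ωF' ∂PF) ^ 2 ∂PF := by
  set M := ∫ ωF, g ωF ∂PF with hM
  have hgi : Integrable g PF := hg.integrable one_le_two
  have hsq : Integrable (fun ωF => (g ωF - M) ^ 2) PF :=
    (hg.sub (memLp_const M)).integrable_sq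
  have hlin : Integrable (fun ωF => (2 * (c - M)) * (M - g ωF)) PF :=
    ((integrable_const M).sub hgi).const_mul _
  have hpt : ∀ ωF, (c - g ωF) ^ 2
      = ((c - M) ^ 2 + (2 * (c - M)) * (M - g ωF)) + (g ωF - M) ^ 2 := by
    intro ωF; ring
  calc ∫ ωF, (c - g ωF) ^ 2 ∂PF
      = ∫ ωF, (((c - M) ^ 2 + (2 * (c - M)) * (M - g ωF)) + (g ωF - M) ^ 2) ∂PF := by
        simp only [hpt]
    _ = (∫ ωF, ((c - M) ^ 2 + (2 * (c - M)) * (M - g ωF)) ∂PF)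
        + ∫ ωF, (g ωF - M) ^ 2 ∂PF := by
        exact integral_add ((integrable_const _).add hlin) hsq
    _ = (c - M) ^ 2 + ∫ ωF, (g ωF - M) ^ 2 ∂PF := by
        rw [integral_add (integrable_const _) hlin, MeasureTheory.integral_const_mul,
          integral_sub (integrable_const M) hgi]
        simp [hM]


/-- **Decomposition of the expected L2-loss PFI over the model distribution.** Under the
noise model `Y = f(X) + ε`, with square-integrable `f̂(·, x)` and integrable integrands,
`∫∫ [(Y − f̂(ω_F,(X̃_S,X_C)))² − (Y − f̂(ω_F,X))²] d(P ⊗ P_F)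
  = E[(f(X) − m(X̃_S,X_C))²] − E[(f(X) − m(X))²] + E[v(X̃_S,X_C)] − E[v(X)]`. -/
theorem stmt_7
    {Ω S C ΩF : Type*} [MeasurableSpace Ω] [MeasurableSpace S] [MeasurableSpace C]
    [MeasurableSpace ΩF]
    (P : Measure Ω) [IsProbabilityMeasure P]
    (PF : Measure ΩF) [IsProbabilityMeasure PF]
    (XS : Ω → S) (XC : Ω → C) (XtS : Ω → S) (Y : Ω → ℝ) (ε : Ω → ℝ)
    (hXS : Measurable XS) (hXC : Measurable XC) (hXtS : Measurable XtS)
    (hε : Measurable ε)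
    (f : S × C → ℝ) (hf : Measurable f)
    (hDGP : ∀ ω, Y ω = f (XS ω, XC ω) + ε ω)
    (hIndep : IndepFun ε (fun ω => (XS ω, XC ω, XtS ω)) P)
    (hε2 : MemLp ε 2 P)
    (hεmean : ∫ ω, ε ω ∂P = 0)
    (σ : ℝ) (hεvar : variance ε P = σ ^ 2)
    (fhat : ΩF × (S × C) → ℝ) (hfhat : Measurable fhat)
    (hfhat2 : ∀ x : S × C, MemLp (fun ωF => fhat (ωF, x)) 2 PF)
    (m v : S × C → ℝ)
    (hm : ∀ x, m x = ∫ ωF, fhat (ωF, x) ∂PF)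
    (hv : ∀ x, v x = ∫ ωF, (fhat (ωF, x) - m x) ^ 2 ∂PF)
    (hIntPerm : Integrable (fun p : Ω × ΩF =>
      (Y p.1 - fhat (p.2, (XtS p.1, XC p.1))) ^ 2) (P.prod PF))
    (hIntOrig : Integrable (fun p : Ω × ΩF =>
      (Y p.1 - fhat (p.2, (XS p.1, XC p.1))) ^ 2) (P.prod PF))
    (hIntBiasPerm : Integrable (fun ω => (f (XS ω, XC ω) - m (XtS ω, XC ω)) ^ 2) P)
    (hIntBiasOrig : Integrable (fun ω => (f (XS ω, XC ω) - m (XS ω, XC ω)) ^ 2) P)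
    (hIntVarPerm : Integrable (fun ω => v (XtS ω, XC ω)) P)
    (hIntVarOrig : Integrable (fun ω => v (XS ω, XC ω)) P) :
    ∫ p : Ω × ΩF, ((Y p.1 - fhat (p.2, (XtS p.1, XC p.1))) ^ 2
        - (Y p.1 - fhat (p.2, (XS p.1, XC p.1))) ^ 2) ∂(P.prod PF)
      = (∫ ω, (f (XS ω, XC ω) - m (XtS ω, XC ω)) ^ 2 ∂P)
        - (∫ ω, (f (XS ω, XC ω) - m (XS ω, XC ω)) ^ 2 ∂P)
        + (∫ ω, v (XtS ω, XC ω) ∂P)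
        - ∫ ω, v (XS ω, XC ω) ∂P := by
  -- measurability of m
  have hmmeas : Measurable m := by
    have h1 : StronglyMeasurable fun x : S × C => ∫ ωF, fhat (ωF, x) ∂PF :=
      hfhat.stronglyMeasurable.integral_prod_left'
    have : m = fun x : S × C => ∫ ωF, fhat (ωF, x) ∂PF := funext hm
    rw [this]; exact h1.measurable
  -- inner integral decomposition
  have hinner_p : ∀ ω, ∫ ωF, (Y ω - fhat (ωF, (XtS ω, XC ω))) ^ 2 ∂PF
      = (Y ω - m (XtS ω, XC ω)) ^ 2 + v (XtS ω, XC ω) := by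
    intro ω
    rw [hv, hm]
    exact pfi_inner_decomp PF _ (hfhat2 _) (Y ω)
  have hinner_o : ∀ ω, ∫ ωF, (Y ω - fhat (ωF, (XS ω, XC ω))) ^ 2 ∂PF
      = (Y ω - m (XS ω, XC ω)) ^ 2 + v (XS ω, XC ω) := by
    intro ω
    rw [hv, hm]
    exact pfi_inner_decomp PF _ (hfhat2 _) (Y ω)
  -- Fubini
  have hFub_p : ∫ p : Ω × ΩF, (Y p.1 - fhat (p.2, (XtS p.1, XC p.1))) ^ 2 ∂(P.prod PF)
      = ∫ ω, ((Y ω - m (XtS ω, XC ω)) ^ 2 + v (XtS ω, XC ω)) ∂P := by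
    rw [integral_prod _ hIntPerm]
    exact integral_congr_ae (Filter.Eventually.of_forall fun ω => hinner_p ω)
  have hFub_o : ∫ p : Ω × ΩF, (Y p.1 - fhat (p.2, (XS p.1, XC p.1))) ^ 2 ∂(P.prod PF)
      = ∫ ω, ((Y ω - m (XS ω, XC ω)) ^ 2 + v (XS ω, XC ω)) ∂P := by
    rw [integral_prod _ hIntOrig]
    exact integral_congr_ae (Filter.Eventually.of_forall fun ω => hinner_o ω)
  -- integrability of decomposed pieces
  have hGp : Integrable (fun ω => (Y ω - m (XtS ω, XC ω)) ^ 2 + v (XtS ω, XC ω)) P :=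
    hIntPerm.integral_prod_left.congr (Filter.Eventually.of_forall fun ω => hinner_p ω)
  have hGo : Integrable (fun ω => (Y ω - m (XS ω, XC ω)) ^ 2 + v (XS ω, XC ω)) P :=
    hIntOrig.integral_prod_left.congr (Filter.Eventually.of_forall fun ω => hinner_o ω)
  have hBp : Integrable (fun ω => (Y ω - m (XtS ω, XC ω)) ^ 2) P := by
    refine (hGp.sub hIntVarPerm).congr (Filter.Eventually.of_forall fun ω => ?_)
    simp
  have hBo : Integrable (fun ω => (Y ω - m (XS ω, XC ω)) ^ 2) P := by
    refine (hGo.sub hIntVarOrig).congr (Filter.Eventually.of_forall fun ω => ?_)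
    simp
  -- the cross term
  have hEint : Integrable
      (fun ω => ε ω * (m (XS ω, XC ω) - m (XtS ω, XC ω))) P := by
    have h1 := ((hBp.sub hIntBiasPerm).sub (hBo.sub hIntBiasOrig)).const_mul (1 / 2 : ℝ)
    refine h1.congr (Filter.Eventually.of_forall fun ω => ?_)
    simp only [Pi.sub_apply]
    rw [hDGP ω]; ring
  have hEzero : ∫ ω, ε ω * (m (XS ω, XC ω) - m (XtS ω, XC ω)) ∂P = 0 := by
    set h : S × C × S → ℝ := fun w => m (w.1, w.2.1) - m (w.2.2, w.2.1) with hh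
    have hhmeas : Measurable h := by
      apply Measurable.sub
      · exact hmmeas.comp (measurable_fst.prodMk (measurable_fst.comp measurable_snd))
      · exact hmmeas.comp
          ((measurable_snd.comp measurable_snd).prodMk (measurable_fst.comp measurable_snd))
    have hind : IndepFun ε (fun ω => h (XS ω, XC ω, XtS ω)) P := by
      have := hIndep.comp (measurable_id : Measurable (id : ℝ → ℝ)) hhmeas
      exact this
    have := hind.integral_fun_mul_eq_mul_integral hε.aestronglyMeasurable
      (hhmeas.comp ((hXS.prodMk (hXC.prodMk hXtS)))).aestronglyMeasurable
    rw [this, hεmean, zero_mul]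
  -- difference of bias terms
  have hkey : (∫ ω, (Y ω - m (XtS ω, XC ω)) ^ 2 ∂P)
      - (∫ ω, (Y ω - m (XS ω, XC ω)) ^ 2 ∂P)
      = (∫ ω, (f (XS ω, XC ω) - m (XtS ω, XC ω)) ^ 2 ∂P)
        - ∫ ω, (f (XS ω, XC ω) - m (XS ω, XC ω)) ^ 2 ∂P := by
    rw [← integral_sub hBp hBo, ← integral_sub hIntBiasPerm hIntBiasOrig]
    have : ∀ ω, (Y ω - m (XtS ω, XC ω)) ^ 2 - (Y ω - m (XS ω, XC ω)) ^ 2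
        = ((f (XS ω, XC ω) - m (XtS ω, XC ω)) ^ 2
            - (f (XS ω, XC ω) - m (XS ω, XC ω)) ^ 2)
          + 2 * (ε ω * (m (XS ω, XC ω) - m (XtS ω, XC ω))) := by
      intro ω; rw [hDGP ω]; ring
    calc ∫ ω, ((Y ω - m (XtS ω, XC ω)) ^ 2 - (Y ω - m (XS ω, XC ω)) ^ 2) ∂P
        = ∫ ω, (((f (XS ω, XC ω) - m (XtS ω, XC ω)) ^ 2
            - (f (XS ω, XC ω) - m (XS ω, XC ω)) ^ 2)
          + 2 * (ε ω * (m (XS ω, XC ω) - m (XtS ω, XC ω)))) ∂P := by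
          simp only [this]
      _ = (∫ ω, ((f (XS ω, XC ω) - m (XtS ω, XC ω)) ^ 2
            - (f (XS ω, XC ω) - m (XS ω, XC ω)) ^ 2) ∂P)
          + ∫ ω, 2 * (ε ω * (m (XS ω, XC ω) - m (XtS ω, XC ω))) ∂P :=
          integral_add (hIntBiasPerm.sub hIntBiasOrig) (hEint.const_mul 2)
      _ = ∫ ω, ((f (XS ω, XC ω) - m (XtS ω, XC ω)) ^ 2
            - (f (XS ω, XC ω) - m (XS ω, XC ω)) ^ 2) ∂P := by
          rw [MeasureTheory.integral_const_mul, hEzero]; ring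
  -- put everything together
  rw [integral_sub hIntPerm hIntOrig, hFub_p, hFub_o,
    integral_add hBp hIntVarPerm, integral_add hBo hIntVarOrig]
  linarith [hkey]
end

section
/- Under the noise model Y = f(X) + ε, suppose for each x ∈ S×C the map ω_F ↦ f̂(ω_F, x) is square-integrable with respect to P_F, and all integrands below are integrable with respect to P ⊗ P_F. Then the bias of the expected model-PFI relative to the DGP-PFI is ∫∫ [(Y − f̂(ω_F,(X̃_S,X_C)))² − (Y − f̂(ω_F,X))²] d(P⊗P_F) − PFI_f = E[(f(X) − m(X̃_S,X_C))² − (f(X) − f(X̃_S,X_C))²] − E[(f(X) − m(X))²] + (E[v(X̃_S,X_C)] − E[v(X)]), i.e., permutation loss bias, minus squared model bias, plus variance inflation. -/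
open MeasureTheory ProbabilityTheory

/-- L2 × L2 product is integrable (via AM–GM). -/
lemma aux_integrable_mul {Ω : Type*} [MeasurableSpace Ω] {P : Measure Ω}
    {a b : Ω → ℝ} (ha : MemLp a 2 P) (hb : MemLp b 2 P) :
    Integrable (fun ω => a ω * b ω) P := by
  refine Integrable.mono' ((ha.integrable_sq.add hb.integrable_sq).div_const 2)
    (ha.aestronglyMeasurable.mul hb.aestronglyMeasurable) ?_
  filter_upwards with ω
  simp only [Pi.add_apply, Real.norm_eq_abs, abs_mul]
  nlinarith [sq_nonneg (|a ω| - |b ω|), sq_abs (a ω), sq_abs (b ω)]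

/-- Expansion of squared sum with vanishing cross term. -/
lemma aux_sq_add {Ω : Type*} [MeasurableSpace Ω] {P : Measure Ω}
    (a b : Ω → ℝ) (ha : MemLp a 2 P) (hb : MemLp b 2 P)
    (hab : ∫ ω, a ω * b ω ∂P = 0) :
    ∫ ω, (a ω + b ω) ^ 2 ∂P = (∫ ω, a ω ^ 2 ∂P) + ∫ ω, b ω ^ 2 ∂P := by
  have hmul : Integrable (fun ω => a ω * b ω) P := aux_integrable_mul ha hb
  have h1 : Integrable (fun ω => a ω ^ 2) P := ha.integrable_sq
  have h2 : Integrable (fun ω => b ω ^ 2) P := hb.integrable_sq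
  have hexp : ∀ ω, (a ω + b ω) ^ 2 = (a ω ^ 2 + 2 * (a ω * b ω)) + b ω ^ 2 := by
    intro ω; ring
  simp_rw [hexp]
  have hi12 : Integrable (fun ω => a ω ^ 2 + 2 * (a ω * b ω)) P := h1.add (hmul.const_mul 2)
  have hc : Integrable (fun ω => 2 * (a ω * b ω)) P := hmul.const_mul 2
  rw [integral_add hi12 h2, integral_add h1 hc, integral_const_mul, hab]
  ring

/-- Bias–variance split of the inner integral. -/
lemma aux_inner {ΩF : Type*} [MeasurableSpace ΩF] (PF : Measure ΩF)
    [IsProbabilityMeasure PF] (c : ℝ) (g : ΩF → ℝ) (hg : MemLp g 2 PF) :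
    ∫ ωF, (c - g ωF) ^ 2 ∂PF
      = (c - ∫ x, g x ∂PF) ^ 2 + ∫ ωF, (g ωF - ∫ x, g x ∂PF) ^ 2 ∂PF := by
  set M : ℝ := ∫ x, g x ∂PF with hM
  have hgi : Integrable g PF := hg.integrable one_le_two
  have hgM : MemLp (fun ωF => g ωF - M) 2 PF := hg.sub (memLp_const M)
  have h0 : ∫ ωF, (g ωF - M) ∂PF = 0 := by
    rw [integral_sub hgi (integrable_const M), integral_const]; simp [hM]
  have hexp : ∀ ωF, (c - g ωF) ^ 2
      = ((c - M) ^ 2 - 2 * (c - M) * (g ωF - M)) + (g ωF - M) ^ 2 := by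
    intro ωF; ring
  simp_rw [hexp]
  have hi1 : Integrable (fun ωF => (c - M) ^ 2 - 2 * (c - M) * (g ωF - M)) PF :=
    (integrable_const _).sub ((hgM.integrable one_le_two).const_mul _)
  rw [integral_add hi1 hgM.integrable_sq,
    integral_sub (integrable_const _) ((hgM.integrable one_le_two).const_mul _),
    integral_const, integral_const_mul, h0]
  simp


/-- **Bias of the expected model-PFI relative to the DGP-PFI (L2 loss).** Under the noise
model `Y = f(X) + ε`, with square-integrable `f̂(·, x)` and integrable integrands,
`∫∫ [(Y − f̂(ω_F,(X̃_S,X_C)))² − (Y − f̂(ω_F,X))²] d(P⊗P_F) − PFI_f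
  = E[(f(X) − m(X̃_S,X_C))² − (f(X) − f(X̃_S,X_C))²] − E[(f(X) − m(X))²]
    + (E[v(X̃_S,X_C)] − E[v(X)])`,
i.e. permutation loss bias, minus squared model bias, plus variance inflation, where
`PFI_f = E[(Y − f(X̃_S,X_C))²] − E[(Y − f(X))²]`. -/
theorem stmt_9
    {Ω S C ΩF : Type*} [MeasurableSpace Ω] [MeasurableSpace S] [MeasurableSpace C]
    [MeasurableSpace ΩF]
    (P : Measure Ω) [IsProbabilityMeasure P]
    (PF : Measure ΩF) [IsProbabilityMeasure PF]
    (XS : Ω → S) (XC : Ω → C) (XtS : Ω → S) (Y : Ω → ℝ) (ε : Ω → ℝ)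
    (hXS : Measurable XS) (hXC : Measurable XC) (hXtS : Measurable XtS)
    (hε : Measurable ε)
    (f : S × C → ℝ) (hf : Measurable f)
    (hDGP : ∀ ω, Y ω = f (XS ω, XC ω) + ε ω)
    (hIndep : IndepFun ε (fun ω => (XS ω, XC ω, XtS ω)) P)
    (hε2 : MemLp ε 2 P)
    (hεmean : ∫ ω, ε ω ∂P = 0)
    (σ : ℝ) (hεvar : variance ε P = σ ^ 2)
    (fhat : ΩF × (S × C) → ℝ) (hfhat : Measurable fhat)
    (hfhat2 : ∀ x : S × C, MemLp (fun ωF => fhat (ωF, x)) 2 PF)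
    (m v : S × C → ℝ)
    (hm : ∀ x, m x = ∫ ωF, fhat (ωF, x) ∂PF)
    (hv : ∀ x, v x = ∫ ωF, (fhat (ωF, x) - m x) ^ 2 ∂PF)
    (hIntPerm : Integrable (fun p : Ω × ΩF =>
      (Y p.1 - fhat (p.2, (XtS p.1, XC p.1))) ^ 2) (P.prod PF))
    (hIntOrig : Integrable (fun p : Ω × ΩF =>
      (Y p.1 - fhat (p.2, (XS p.1, XC p.1))) ^ 2) (P.prod PF))
    (hfX2 : MemLp (fun ω => f (XS ω, XC ω)) 2 P)
    (hfXt2 : MemLp (fun ω => f (XtS ω, XC ω)) 2 P)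
    (hIntPermBias : Integrable (fun ω =>
      (f (XS ω, XC ω) - m (XtS ω, XC ω)) ^ 2
        - (f (XS ω, XC ω) - f (XtS ω, XC ω)) ^ 2) P)
    (hIntBiasOrig : Integrable (fun ω => (f (XS ω, XC ω) - m (XS ω, XC ω)) ^ 2) P)
    (hIntVarPerm : Integrable (fun ω => v (XtS ω, XC ω)) P)
    (hIntVarOrig : Integrable (fun ω => v (XS ω, XC ω)) P) :
    (∫ p : Ω × ΩF, ((Y p.1 - fhat (p.2, (XtS p.1, XC p.1))) ^ 2
        - (Y p.1 - fhat (p.2, (XS p.1, XC p.1))) ^ 2) ∂(P.prod PF))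
      - ((∫ ω, (Y ω - f (XtS ω, XC ω)) ^ 2 ∂P) - ∫ ω, (Y ω - f (XS ω, XC ω)) ^ 2 ∂P)
      = (∫ ω, ((f (XS ω, XC ω) - m (XtS ω, XC ω)) ^ 2
            - (f (XS ω, XC ω) - f (XtS ω, XC ω)) ^ 2) ∂P)
        - (∫ ω, (f (XS ω, XC ω) - m (XS ω, XC ω)) ^ 2 ∂P)
        + ((∫ ω, v (XtS ω, XC ω) ∂P) - ∫ ω, v (XS ω, XC ω) ∂P) := by
  have hX : Measurable (fun ω => (XS ω, XC ω)) := hXS.prodMk hXC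
  have hXt : Measurable (fun ω => (XtS ω, XC ω)) := hXtS.prodMk hXC
  have hmM : Measurable m := by
    have he : m = fun x => ∫ ωF, fhat (ωF, x) ∂PF := funext hm
    rw [he]
    exact (hfhat.stronglyMeasurable.integral_prod_left').measurable
  -- L2 memberships
  have hBmem : MemLp (fun ω => f (XS ω, XC ω) - f (XtS ω, XC ω)) 2 P := hfX2.sub hfXt2
  have hB2 : Integrable (fun ω => (f (XS ω, XC ω) - f (XtS ω, XC ω)) ^ 2) P :=
    hBmem.integrable_sq
  have hAmeas : Measurable (fun ω => f (XS ω, XC ω) - m (XtS ω, XC ω)) :=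
    (hf.comp hX).sub (hmM.comp hXt)
  have hA2 : Integrable (fun ω => (f (XS ω, XC ω) - m (XtS ω, XC ω)) ^ 2) P := by
    have he : (fun ω => (f (XS ω, XC ω) - m (XtS ω, XC ω)) ^ 2)
        = fun ω => ((f (XS ω, XC ω) - m (XtS ω, XC ω)) ^ 2
            - (f (XS ω, XC ω) - f (XtS ω, XC ω)) ^ 2)
          + (f (XS ω, XC ω) - f (XtS ω, XC ω)) ^ 2 := by
      funext ω; ring
    rw [he]; exact hIntPermBias.add hB2
  have hAmem : MemLp (fun ω => f (XS ω, XC ω) - m (XtS ω, XC ω)) 2 P :=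
    (memLp_two_iff_integrable_sq hAmeas.aestronglyMeasurable).mpr hA2
  have hDmeas : Measurable (fun ω => f (XS ω, XC ω) - m (XS ω, XC ω)) :=
    (hf.comp hX).sub (hmM.comp hX)
  have hDmem : MemLp (fun ω => f (XS ω, XC ω) - m (XS ω, XC ω)) 2 P :=
    (memLp_two_iff_integrable_sq hDmeas.aestronglyMeasurable).mpr hIntBiasOrig
  -- vanishing cross terms
  have hW : Measurable (fun ω => (XS ω, XC ω, XtS ω)) := hXS.prodMk (hXC.prodMk hXtS)
  have crossgen : ∀ g : S × C × S → ℝ, Measurable g →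
      ∫ ω, g (XS ω, XC ω, XtS ω) * ε ω ∂P = 0 := by
    intro g hg
    have hind : IndepFun (fun ω => g (XS ω, XC ω, XtS ω)) ε P :=
      (hIndep.comp measurable_id hg).symm
    have h := hind.integral_fun_mul_eq_mul_integral (hg.comp hW).aestronglyMeasurable hε.aestronglyMeasurable
    have h2 : ∫ ω, g (XS ω, XC ω, XtS ω) * ε ω ∂P
        = (∫ ω, g (XS ω, XC ω, XtS ω) ∂P) * ∫ ω, ε ω ∂P := h
    rw [h2, hεmean, mul_zero]
  have crossA : ∫ ω, (f (XS ω, XC ω) - m (XtS ω, XC ω)) * ε ω ∂P = 0 :=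
    crossgen (fun p => f (p.1, p.2.1) - m (p.2.2, p.2.1))
      ((hf.comp (measurable_fst.prodMk (measurable_fst.comp measurable_snd))).sub
        (hmM.comp ((measurable_snd.comp measurable_snd).prodMk
          (measurable_fst.comp measurable_snd))))
  have crossB : ∫ ω, (f (XS ω, XC ω) - f (XtS ω, XC ω)) * ε ω ∂P = 0 :=
    crossgen (fun p => f (p.1, p.2.1) - f (p.2.2, p.2.1))
      ((hf.comp (measurable_fst.prodMk (measurable_fst.comp measurable_snd))).sub
        (hf.comp ((measurable_snd.comp measurable_snd).prodMk
          (measurable_fst.comp measurable_snd))))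
  have crossD : ∫ ω, (f (XS ω, XC ω) - m (XS ω, XC ω)) * ε ω ∂P = 0 :=
    crossgen (fun p => f (p.1, p.2.1) - m (p.1, p.2.1))
      ((hf.comp (measurable_fst.prodMk (measurable_fst.comp measurable_snd))).sub
        (hmM.comp (measurable_fst.prodMk (measurable_fst.comp measurable_snd))))
  -- Fubini + inner bias-variance decomposition, permuted version
  have e1 : ∫ p : Ω × ΩF, (Y p.1 - fhat (p.2, (XtS p.1, XC p.1))) ^ 2 ∂(P.prod PF)
      = ((∫ ω, (f (XS ω, XC ω) - m (XtS ω, XC ω)) ^ 2 ∂P) + ∫ ω, ε ω ^ 2 ∂P)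
        + ∫ ω, v (XtS ω, XC ω) ∂P := by
    rw [integral_prod _ hIntPerm]
    have hin : ∀ ω, (∫ ωF, (Y ω - fhat (ωF, (XtS ω, XC ω))) ^ 2 ∂PF)
        = (Y ω - m (XtS ω, XC ω)) ^ 2 + v (XtS ω, XC ω) := by
      intro ω
      rw [hv, hm]
      exact aux_inner PF (Y ω) (fun ωF => fhat (ωF, (XtS ω, XC ω))) (hfhat2 _)
    simp_rw [hin]
    have hYm : ∀ ω, Y ω - m (XtS ω, XC ω)
        = (f (XS ω, XC ω) - m (XtS ω, XC ω)) + ε ω := by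
      intro ω; rw [hDGP ω]; ring
    simp_rw [hYm]
    have hsq : Integrable
        (fun ω => ((f (XS ω, XC ω) - m (XtS ω, XC ω)) + ε ω) ^ 2) P :=
      (hAmem.add hε2).integrable_sq
    rw [integral_add hsq hIntVarPerm, aux_sq_add _ _ hAmem hε2 crossA]
  -- original version
  have e2 : ∫ p : Ω × ΩF, (Y p.1 - fhat (p.2, (XS p.1, XC p.1))) ^ 2 ∂(P.prod PF)
      = ((∫ ω, (f (XS ω, XC ω) - m (XS ω, XC ω)) ^ 2 ∂P) + ∫ ω, ε ω ^ 2 ∂P)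
        + ∫ ω, v (XS ω, XC ω) ∂P := by
    rw [integral_prod _ hIntOrig]
    have hin : ∀ ω, (∫ ωF, (Y ω - fhat (ωF, (XS ω, XC ω))) ^ 2 ∂PF)
        = (Y ω - m (XS ω, XC ω)) ^ 2 + v (XS ω, XC ω) := by
      intro ω
      rw [hv, hm]
      exact aux_inner PF (Y ω) (fun ωF => fhat (ωF, (XS ω, XC ω))) (hfhat2 _)
    simp_rw [hin]
    have hYm : ∀ ω, Y ω - m (XS ω, XC ω)
        = (f (XS ω, XC ω) - m (XS ω, XC ω)) + ε ω := by
      intro ω; rw [hDGP ω]; ring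
    simp_rw [hYm]
    have hsq : Integrable
        (fun ω => ((f (XS ω, XC ω) - m (XS ω, XC ω)) + ε ω) ^ 2) P :=
      (hDmem.add hε2).integrable_sq
    rw [integral_add hsq hIntVarOrig, aux_sq_add _ _ hDmem hε2 crossD]
  -- DGP-PFI pieces
  have e3 : ∫ ω, (Y ω - f (XtS ω, XC ω)) ^ 2 ∂P
      = (∫ ω, (f (XS ω, XC ω) - f (XtS ω, XC ω)) ^ 2 ∂P) + ∫ ω, ε ω ^ 2 ∂P := by
    have hYm : ∀ ω, Y ω - f (XtS ω, XC ω)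
        = (f (XS ω, XC ω) - f (XtS ω, XC ω)) + ε ω := by
      intro ω; rw [hDGP ω]; ring
    simp_rw [hYm]
    exact aux_sq_add _ _ hBmem hε2 crossB
  have e4 : ∫ ω, (Y ω - f (XS ω, XC ω)) ^ 2 ∂P = ∫ ω, ε ω ^ 2 ∂P := by
    have hYm : ∀ ω, Y ω - f (XS ω, XC ω) = ε ω := by
      intro ω; rw [hDGP ω]; ring
    simp_rw [hYm]
  -- split the product integral and the RHS integral
  have e0 : ∫ p : Ω × ΩF, ((Y p.1 - fhat (p.2, (XtS p.1, XC p.1))) ^ 2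
        - (Y p.1 - fhat (p.2, (XS p.1, XC p.1))) ^ 2) ∂(P.prod PF)
      = (∫ p : Ω × ΩF, (Y p.1 - fhat (p.2, (XtS p.1, XC p.1))) ^ 2 ∂(P.prod PF))
        - ∫ p : Ω × ΩF, (Y p.1 - fhat (p.2, (XS p.1, XC p.1))) ^ 2 ∂(P.prod PF) :=
    integral_sub hIntPerm hIntOrig
  have e5 : ∫ ω, ((f (XS ω, XC ω) - m (XtS ω, XC ω)) ^ 2
        - (f (XS ω, XC ω) - f (XtS ω, XC ω)) ^ 2) ∂P
      = (∫ ω, (f (XS ω, XC ω) - m (XtS ω, XC ω)) ^ 2 ∂P)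
        - ∫ ω, (f (XS ω, XC ω) - f (XtS ω, XC ω)) ^ 2 ∂P :=
    integral_sub hA2 hB2
  rw [e0, e1, e2, e3, e4, e5]
  ring
end

section
/- Under the noise model Y = f(X) + ε, suppose the model is unbiased, i.e., m(x) = f(x) for all x ∈ S×C, that for each x the map ω_F ↦ f̂(ω_F, x) is square-integrable with respect to P_F, that all integrands below are integrable with respect to P ⊗ P_F, and that (X̃_S, X_C) has the same joint law as (X_S, X_C) (conditional sampling). Then the expected L2-loss PFI over the model distribution equals the DGP-PFI: ∫∫ [(Y − f̂(ω_F,(X̃_S,X_C)))² − (Y − f̂(ω_F,X))²] d(P⊗P_F) = E[(f(X) − f(X̃_S, X_C))²] = PFI_f. -/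
open MeasureTheory ProbabilityTheory

/-- **Unbiasedness of the conditional PFI for unbiased models (L2 loss).** Under the noise
model `Y = f(X) + ε`, if the model is unbiased (`m = f`), `f̂(·, x)` is square-integrable,
all integrands are integrable, and `(X̃_S, X_C)` has the same joint law as `(X_S, X_C)`
(conditional sampling), then the expected L2-loss PFI over the model distribution equals the
DGP-PFI:
`∫∫ [(Y − f̂(ω_F,(X̃_S,X_C)))² − (Y − f̂(ω_F,X))²] d(P⊗P_F) = E[(f(X) − f(X̃_S,X_C))²] = PFI_f`. -/
theorem stmt_10
    {Ω S C ΩF : Type*} [MeasurableSpace Ω] [MeasurableSpace S] [MeasurableSpace C]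
    [MeasurableSpace ΩF]
    (P : Measure Ω) [IsProbabilityMeasure P]
    (PF : Measure ΩF) [IsProbabilityMeasure PF]
    (XS : Ω → S) (XC : Ω → C) (XtS : Ω → S) (Y : Ω → ℝ) (ε : Ω → ℝ)
    (hXS : Measurable XS) (hXC : Measurable XC) (hXtS : Measurable XtS)
    (hε : Measurable ε)
    (f : S × C → ℝ) (hf : Measurable f)
    (hDGP : ∀ ω, Y ω = f (XS ω, XC ω) + ε ω)
    (hIndep : IndepFun ε (fun ω => (XS ω, XC ω, XtS ω)) P)
    (hε2 : MemLp ε 2 P)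
    (hεmean : ∫ ω, ε ω ∂P = 0)
    (σ : ℝ) (hεvar : variance ε P = σ ^ 2)
    (fhat : ΩF × (S × C) → ℝ) (hfhat : Measurable fhat)
    (hfhat2 : ∀ x : S × C, MemLp (fun ωF => fhat (ωF, x)) 2 PF)
    (m v : S × C → ℝ)
    (hm : ∀ x, m x = ∫ ωF, fhat (ωF, x) ∂PF)
    (hv : ∀ x, v x = ∫ ωF, (fhat (ωF, x) - m x) ^ 2 ∂PF)
    (hUnbiased : ∀ x : S × C, m x = f x)
    (hIntPerm : Integrable (fun p : Ω × ΩF =>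
      (Y p.1 - fhat (p.2, (XtS p.1, XC p.1))) ^ 2) (P.prod PF))
    (hIntOrig : Integrable (fun p : Ω × ΩF =>
      (Y p.1 - fhat (p.2, (XS p.1, XC p.1))) ^ 2) (P.prod PF))
    (hfX2 : MemLp (fun ω => f (XS ω, XC ω)) 2 P)
    (hfXt2 : MemLp (fun ω => f (XtS ω, XC ω)) 2 P)
    (hIntVarPerm : Integrable (fun ω => v (XtS ω, XC ω)) P)
    (hIntVarOrig : Integrable (fun ω => v (XS ω, XC ω)) P)
    (hCondSampling : Measure.map (fun ω => (XtS ω, XC ω)) P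
      = Measure.map (fun ω => (XS ω, XC ω)) P) :
    (∫ p : Ω × ΩF, ((Y p.1 - fhat (p.2, (XtS p.1, XC p.1))) ^ 2
        - (Y p.1 - fhat (p.2, (XS p.1, XC p.1))) ^ 2) ∂(P.prod PF))
      = ∫ ω, (f (XS ω, XC ω) - f (XtS ω, XC ω)) ^ 2 ∂P
    ∧ (∫ ω, (f (XS ω, XC ω) - f (XtS ω, XC ω)) ^ 2 ∂P)
      = (∫ ω, (Y ω - f (XtS ω, XC ω)) ^ 2 ∂P) - ∫ ω, (Y ω - f (XS ω, XC ω)) ^ 2 ∂P := by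
  -- notation
  set T : Ω → S × C := fun ω => (XtS ω, XC ω) with hT
  set U : Ω → S × C := fun ω => (XS ω, XC ω) with hU
  have hTm : Measurable T := hXtS.prodMk hXC
  have hUm : Measurable U := hXS.prodMk hXC
  set d : Ω → ℝ := fun ω => f (U ω) - f (T ω) with hd
  have hd2 : MemLp d 2 P := hfX2.sub hfXt2
  have hdm : Measurable d := (hf.comp hUm).sub (hf.comp hTm)
  -- mean of fhat equals f
  have hmf : ∀ x, ∫ ωF, fhat (ωF, x) ∂PF = f x := fun x =>
    (hm x).symm.trans (hUnbiased x)
  -- inner integral computation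
  have hInner : ∀ (c : ℝ) (x : S × C),
      ∫ ωF, (c - fhat (ωF, x)) ^ 2 ∂PF = (c - f x) ^ 2 + v x := by
    intro c x
    have h2 := hfhat2 x
    have hg2 : MemLp (fun ωF => fhat (ωF, x) - f x) 2 PF :=
      h2.sub (memLp_const _)
    have hgint : Integrable (fun ωF => fhat (ωF, x) - f x) PF :=
      hg2.integrable one_le_two
    have hgmean : ∫ ωF, (fhat (ωF, x) - f x) ∂PF = 0 := by
      rw [integral_sub (h2.integrable one_le_two) (integrable_const _), hmf x,
        integral_const]
      simp
    have hvx : v x = ∫ ωF, (fhat (ωF, x) - f x) ^ 2 ∂PF := by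
      rw [hv x, hUnbiased x]
    have hptw : ∀ ωF, (c - fhat (ωF, x)) ^ 2 =
        (fhat (ωF, x) - f x) ^ 2 + ((-2 * (c - f x)) * (fhat (ωF, x) - f x) + (c - f x) ^ 2) := by
      intro ωF; ring
    rw [show (fun ωF => (c - fhat (ωF, x)) ^ 2) = fun ωF =>
        (fhat (ωF, x) - f x) ^ 2 + ((-2 * (c - f x)) * (fhat (ωF, x) - f x) + (c - f x) ^ 2)
      from funext hptw]
    have hA : Integrable (fun ωF => (-2 * (c - f x)) * (fhat (ωF, x) - f x) + (c - f x) ^ 2) PF :=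
      (hgint.const_mul _).add (integrable_const _)
    rw [integral_add hg2.integrable_sq hA,
      integral_add (hgint.const_mul _) (integrable_const _),
      integral_const_mul, hgmean, integral_const]
    simp [hvx]
    ring
  -- measurability of v
  have hmSM : StronglyMeasurable m := by
    have : m = fun x => ∫ ωF, fhat (ωF, x) ∂PF := funext hm
    rw [this]
    exact hfhat.stronglyMeasurable.integral_prod_left'
  have hvSM : StronglyMeasurable v := by
    have : v = fun x => ∫ ωF, (fhat (ωF, x) - m x) ^ 2 ∂PF := funext hv
    rw [this]
    exact ((hfhat.sub (hmSM.measurable.comp measurable_snd)).pow_const 2).stronglyMeasurable.integral_prod_left'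
  -- equality of v integrals
  have hvEq : ∫ ω, v (T ω) ∂P = ∫ ω, v (U ω) ∂P := by
    rw [← integral_map hTm.aemeasurable hvSM.aestronglyMeasurable,
      ← integral_map hUm.aemeasurable hvSM.aestronglyMeasurable, hCondSampling]
  -- Fubini for both product integrals
  have hYT2 : Integrable (fun ω => (Y ω - f (T ω)) ^ 2) P := by
    have : (fun ω => Y ω - f (T ω)) = fun ω => ε ω + d ω := by
      funext ω; rw [hDGP ω]; simp [hd, hU, hT]; ring
    have hL2 : MemLp (fun ω => Y ω - f (T ω)) 2 P := by rw [this]; exact hε2.add hd2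
    exact hL2.integrable_sq
  have hYU2 : Integrable (fun ω => (Y ω - f (U ω)) ^ 2) P := by
    have : (fun ω => Y ω - f (U ω)) = ε := by
      funext ω; rw [hDGP ω]; simp [hU]
    rw [show (fun ω => (Y ω - f (U ω)) ^ 2) = fun ω => ε ω ^ 2 by rw [← this]]
    exact hε2.integrable_sq
  have hFubPerm : ∫ p : Ω × ΩF, (Y p.1 - fhat (p.2, T p.1)) ^ 2 ∂(P.prod PF)
      = (∫ ω, (Y ω - f (T ω)) ^ 2 ∂P) + ∫ ω, v (T ω) ∂P := by
    rw [integral_prod _ hIntPerm]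
    have : ∀ ω, ∫ ωF, (Y ω - fhat (ωF, T ω)) ^ 2 ∂PF = (Y ω - f (T ω)) ^ 2 + v (T ω) :=
      fun ω => hInner (Y ω) (T ω)
    rw [show (fun ω => ∫ ωF, (Y ω - fhat (ωF, T ω)) ^ 2 ∂PF)
        = fun ω => (Y ω - f (T ω)) ^ 2 + v (T ω) from funext this]
    exact integral_add hYT2 hIntVarPerm
  have hFubOrig : ∫ p : Ω × ΩF, (Y p.1 - fhat (p.2, U p.1)) ^ 2 ∂(P.prod PF)
      = (∫ ω, (Y ω - f (U ω)) ^ 2 ∂P) + ∫ ω, v (U ω) ∂P := by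
    rw [integral_prod _ hIntOrig]
    have : ∀ ω, ∫ ωF, (Y ω - fhat (ωF, U ω)) ^ 2 ∂PF = (Y ω - f (U ω)) ^ 2 + v (U ω) :=
      fun ω => hInner (Y ω) (U ω)
    rw [show (fun ω => ∫ ωF, (Y ω - fhat (ωF, U ω)) ^ 2 ∂PF)
        = fun ω => (Y ω - f (U ω)) ^ 2 + v (U ω) from funext this]
    exact integral_add hYU2 hIntVarOrig
  -- independence of ε and d
  have hIndepD : IndepFun ε d P := by
    have hg : Measurable (fun p : S × C × S => f (p.1, p.2.1) - f (p.2.2, p.2.1)) := by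
      exact (hf.comp (measurable_fst.prodMk (measurable_fst.comp measurable_snd))).sub
        (hf.comp ((measurable_snd.comp measurable_snd).prodMk
          (measurable_fst.comp measurable_snd)))
    have := hIndep.comp measurable_id hg
    exact this
  have hεd : ∫ ω, ε ω * d ω ∂P = 0 := by
    have := hIndepD.integral_mul_eq_mul_integral hε.aestronglyMeasurable hdm.aestronglyMeasurable
    calc ∫ ω, ε ω * d ω ∂P = ∫ ω, (ε * d) ω ∂P := rfl
      _ = (∫ ω, ε ω ∂P) * ∫ ω, d ω ∂P := this
      _ = 0 := by rw [hεmean]; ring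
  have hεdInt : Integrable (fun ω => ε ω * d ω) P :=
    hIndepD.integrable_mul (hε2.integrable one_le_two) (hd2.integrable one_le_two)
  -- compute ∫ (Y - f∘T)^2 and ∫ (Y - f∘U)^2
  have hEU : ∫ ω, (Y ω - f (U ω)) ^ 2 ∂P = ∫ ω, ε ω ^ 2 ∂P := by
    congr 1; funext ω; rw [hDGP ω]; simp [hU]
  have hET : ∫ ω, (Y ω - f (T ω)) ^ 2 ∂P = (∫ ω, ε ω ^ 2 ∂P) + ∫ ω, d ω ^ 2 ∂P := by
    have hptw : (fun ω => (Y ω - f (T ω)) ^ 2)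
        = fun ω => ε ω ^ 2 + (2 * (ε ω * d ω) + d ω ^ 2) := by
      funext ω; rw [hDGP ω]; simp only [hd, hU, hT]; ring
    have hA : Integrable (fun ω => 2 * (ε ω * d ω) + d ω ^ 2) P :=
      (hεdInt.const_mul 2).add hd2.integrable_sq
    rw [hptw, integral_add hε2.integrable_sq hA,
      integral_add (hεdInt.const_mul 2) hd2.integrable_sq, integral_const_mul, hεd]
    ring
  have key : ∫ ω, d ω ^ 2 ∂P = ∫ ω, (f (XS ω, XC ω) - f (XtS ω, XC ω)) ^ 2 ∂P := rfl
  constructor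
  · rw [integral_sub hIntPerm hIntOrig]
    rw [show (∫ p : Ω × ΩF, (Y p.1 - fhat (p.2, (XtS p.1, XC p.1))) ^ 2 ∂(P.prod PF))
        = ∫ p : Ω × ΩF, (Y p.1 - fhat (p.2, T p.1)) ^ 2 ∂(P.prod PF) from rfl,
      show (∫ p : Ω × ΩF, (Y p.1 - fhat (p.2, (XS p.1, XC p.1))) ^ 2 ∂(P.prod PF))
        = ∫ p : Ω × ΩF, (Y p.1 - fhat (p.2, U p.1)) ^ 2 ∂(P.prod PF) from rfl,
      hFubPerm, hFubOrig, hvEq, hET, hEU, ← key]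
    ring
  · rw [show (∫ ω, (Y ω - f (XtS ω, XC ω)) ^ 2 ∂P) = ∫ ω, (Y ω - f (T ω)) ^ 2 ∂P from rfl,
      show (∫ ω, (Y ω - f (XS ω, XC ω)) ^ 2 ∂P) = ∫ ω, (Y ω - f (U ω)) ^ 2 ∂P from rfl,
      hET, hEU, ← key]
    ring
end

section
/- Under the noise model Y = f(X) + ε, suppose the model is unbiased, i.e., m(x) = f(x) for all x ∈ S×C, that for each x the map ω_F ↦ f̂(ω_F, x) is square-integrable with respect to P_F, and that all integrands below are integrable with respect to P ⊗ P_F. Then the deviation of the expected L2-loss PFI over the model distribution from the DGP-PFI equals the variance inflation term: ∫∫ [(Y − f̂(ω_F,(X̃_S,X_C)))² − (Y − f̂(ω_F,X))²] d(P⊗P_F) − E[(f(X) − f(X̃_S,X_C))²] = E[v(X̃_S, X_C)] − E[v(X_S, X_C)]. In particular, if (X̃_S, X_C) has the same joint law as (X_S, X_C) (e.g., for marginal sampling when X̃_S has the law of X_S, is independent of X_C, and X_S is independent of X_C), the expected PFI equals the DGP-PFI. -/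
open MeasureTheory ProbabilityTheory

lemma biasvar {ΩF : Type*} [MeasurableSpace ΩF] (μ : Measure ΩF) [IsProbabilityMeasure μ]
    (g : ΩF → ℝ) (hg : MemLp g 2 μ) (b : ℝ) :
    ∫ ω, (b - g ω) ^ 2 ∂μ
      = (b - ∫ x, g x ∂μ) ^ 2 + ∫ ω, (g ω - ∫ x, g x ∂μ) ^ 2 ∂μ := by
  set M := ∫ x, g x ∂μ with hM
  have hgi : Integrable g μ := hg.integrable (by norm_num)
  have h2 : Integrable (fun ω => (g ω - M) ^ 2) μ :=
    (hg.sub (memLp_const M)).integrable_sq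
  have e : (fun ω => (b - g ω) ^ 2)
      = fun ω => (g ω - M) ^ 2 + ((-2 * (b - M)) * (g ω - M) + (b - M) ^ 2) := by
    funext ω; ring
  have hsub : Integrable (fun ω => g ω - M) μ := hgi.sub (integrable_const M)
  have hcm : Integrable (fun ω => (-2 * (b - M)) * (g ω - M)) μ := hsub.const_mul _
  have h3 : Integrable (fun ω => (-2 * (b - M)) * (g ω - M) + (b - M) ^ 2) μ :=
    hcm.add (integrable_const _)
  rw [e, integral_add h2 h3, integral_add hcm (integrable_const _),
    integral_const_mul, integral_sub hgi (integrable_const M), integral_const]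
  simp [← hM]
  ring

/-- **Variance inflation of the PFI for unbiased models (L2 loss).** Under the noise model
`Y = f(X) + ε`, if the model is unbiased (`m = f`), `f̂(·, x)` is square-integrable, and all
integrands are integrable, then the deviation of the expected L2-loss PFI over the model
distribution from the DGP-PFI equals the variance inflation term:
`∫∫ [(Y − f̂(ω_F,(X̃_S,X_C)))² − (Y − f̂(ω_F,X))²] d(P⊗P_F) − E[(f(X) − f(X̃_S,X_C))²]
  = E[v(X̃_S, X_C)] − E[v(X_S, X_C)]`.
In particular, if `(X̃_S, X_C)` has the same joint law as `(X_S, X_C)`, the expected PFI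
equals the DGP-PFI. -/
theorem stmt_11
    {Ω S C ΩF : Type*} [MeasurableSpace Ω] [MeasurableSpace S] [MeasurableSpace C]
    [MeasurableSpace ΩF]
    (P : Measure Ω) [IsProbabilityMeasure P]
    (PF : Measure ΩF) [IsProbabilityMeasure PF]
    (XS : Ω → S) (XC : Ω → C) (XtS : Ω → S) (Y : Ω → ℝ) (ε : Ω → ℝ)
    (hXS : Measurable XS) (hXC : Measurable XC) (hXtS : Measurable XtS)
    (hε : Measurable ε)
    (f : S × C → ℝ) (hf : Measurable f)
    (hDGP : ∀ ω, Y ω = f (XS ω, XC ω) + ε ω)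
    (hIndep : IndepFun ε (fun ω => (XS ω, XC ω, XtS ω)) P)
    (hε2 : MemLp ε 2 P)
    (hεmean : ∫ ω, ε ω ∂P = 0)
    (σ : ℝ) (hεvar : variance ε P = σ ^ 2)
    (fhat : ΩF × (S × C) → ℝ) (hfhat : Measurable fhat)
    (hfhat2 : ∀ x : S × C, MemLp (fun ωF => fhat (ωF, x)) 2 PF)
    (m v : S × C → ℝ)
    (hm : ∀ x, m x = ∫ ωF, fhat (ωF, x) ∂PF)
    (hv : ∀ x, v x = ∫ ωF, (fhat (ωF, x) - m x) ^ 2 ∂PF)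
    (hUnbiased : ∀ x : S × C, m x = f x)
    (hIntPerm : Integrable (fun p : Ω × ΩF =>
      (Y p.1 - fhat (p.2, (XtS p.1, XC p.1))) ^ 2) (P.prod PF))
    (hIntOrig : Integrable (fun p : Ω × ΩF =>
      (Y p.1 - fhat (p.2, (XS p.1, XC p.1))) ^ 2) (P.prod PF))
    (hfX2 : MemLp (fun ω => f (XS ω, XC ω)) 2 P)
    (hfXt2 : MemLp (fun ω => f (XtS ω, XC ω)) 2 P)
    (hIntVarPerm : Integrable (fun ω => v (XtS ω, XC ω)) P)
    (hIntVarOrig : Integrable (fun ω => v (XS ω, XC ω)) P) :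
    (∫ p : Ω × ΩF, ((Y p.1 - fhat (p.2, (XtS p.1, XC p.1))) ^ 2
          - (Y p.1 - fhat (p.2, (XS p.1, XC p.1))) ^ 2) ∂(P.prod PF))
        - (∫ ω, (f (XS ω, XC ω) - f (XtS ω, XC ω)) ^ 2 ∂P)
      = (∫ ω, v (XtS ω, XC ω) ∂P) - ∫ ω, v (XS ω, XC ω) ∂P
    ∧ (Measure.map (fun ω => (XtS ω, XC ω)) P = Measure.map (fun ω => (XS ω, XC ω)) P →
        (∫ p : Ω × ΩF, ((Y p.1 - fhat (p.2, (XtS p.1, XC p.1))) ^ 2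
            - (Y p.1 - fhat (p.2, (XS p.1, XC p.1))) ^ 2) ∂(P.prod PF))
          = ∫ ω, (f (XS ω, XC ω) - f (XtS ω, XC ω)) ^ 2 ∂P) := by
  -- inner (over ωF) integral via bias-variance decomposition
  have hinner : ∀ (b : ℝ) (x : S × C),
      ∫ ωF, (b - fhat (ωF, x)) ^ 2 ∂PF = (b - f x) ^ 2 + v x := by
    intro b x
    rw [biasvar PF (fun ωF => fhat (ωF, x)) (hfhat2 x) b, ← hm x, ← hv x, hUnbiased x]
  -- integrability of squared residuals
  have hg2 : MemLp (fun ω => f (XS ω, XC ω) - f (XtS ω, XC ω)) 2 P := hfX2.sub hfXt2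
  have hgsq : Integrable (fun ω => (f (XS ω, XC ω) - f (XtS ω, XC ω)) ^ 2) P :=
    hg2.integrable_sq
  have hYt2 : MemLp (fun ω => Y ω - f (XtS ω, XC ω)) 2 P := by
    have he : (fun ω => Y ω - f (XtS ω, XC ω))
        = fun ω => (f (XS ω, XC ω) - f (XtS ω, XC ω)) + ε ω := by
      funext ω; rw [hDGP ω]; ring
    rw [he]; exact hg2.add hε2
  have hItsq : Integrable (fun ω => (Y ω - f (XtS ω, XC ω)) ^ 2) P := hYt2.integrable_sq
  have hεsq : Integrable (fun ω => ε ω ^ 2) P := hε2.integrable_sq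
  -- Fubini for permuted term
  have hPerm : ∫ p : Ω × ΩF, (Y p.1 - fhat (p.2, (XtS p.1, XC p.1))) ^ 2 ∂(P.prod PF)
      = (∫ ω, (Y ω - f (XtS ω, XC ω)) ^ 2 ∂P) + ∫ ω, v (XtS ω, XC ω) ∂P := by
    rw [integral_prod _ hIntPerm, ← integral_add hItsq hIntVarPerm]
    refine integral_congr_ae (Filter.Eventually.of_forall fun ω => ?_)
    simpa using hinner (Y ω) (XtS ω, XC ω)
  -- Fubini for original term
  have hOrig : ∫ p : Ω × ΩF, (Y p.1 - fhat (p.2, (XS p.1, XC p.1))) ^ 2 ∂(P.prod PF)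
      = (∫ ω, ε ω ^ 2 ∂P) + ∫ ω, v (XS ω, XC ω) ∂P := by
    rw [integral_prod _ hIntOrig, ← integral_add hεsq hIntVarOrig]
    refine integral_congr_ae (Filter.Eventually.of_forall fun ω => ?_)
    have h2 : Y ω - f (XS ω, XC ω) = ε ω := by rw [hDGP ω]; ring
    simpa [h2] using hinner (Y ω) (XS ω, XC ω)
  -- cross term vanishes by independence
  have hgi : Integrable (fun ω => f (XS ω, XC ω) - f (XtS ω, XC ω)) P :=
    hg2.integrable (by norm_num)
  have hφ : Measurable (fun q : S × C × S => f (q.1, q.2.1) - f (q.2.2, q.2.1)) := by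
    exact (hf.comp (measurable_fst.prodMk (measurable_fst.comp measurable_snd))).sub
      (hf.comp ((measurable_snd.comp measurable_snd).prodMk
        (measurable_fst.comp measurable_snd)))
  have hind : IndepFun (fun ω => f (XS ω, XC ω) - f (XtS ω, XC ω)) ε P :=
    (hIndep.comp measurable_id hφ).symm
  have hcross0 : ∫ ω, (f (XS ω, XC ω) - f (XtS ω, XC ω)) * ε ω ∂P = 0 := by
    rw [hind.integral_fun_mul_eq_mul_integral hgi.aestronglyMeasurable (hε2.integrable one_le_two).aestronglyMeasurable,
      hεmean, mul_zero]
  have hcrossInt : Integrable (fun ω => (f (XS ω, XC ω) - f (XtS ω, XC ω)) * ε ω) P :=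
    hind.integrable_mul hgi (hε2.integrable one_le_two)
  -- expand (Y - f(Xt))^2
  have hexp : ∫ ω, (Y ω - f (XtS ω, XC ω)) ^ 2 ∂P
      = (∫ ω, (f (XS ω, XC ω) - f (XtS ω, XC ω)) ^ 2 ∂P) + ∫ ω, ε ω ^ 2 ∂P := by
    have he : (fun ω => (Y ω - f (XtS ω, XC ω)) ^ 2)
        = fun ω => (f (XS ω, XC ω) - f (XtS ω, XC ω)) ^ 2
          + (2 * ((f (XS ω, XC ω) - f (XtS ω, XC ω)) * ε ω) + ε ω ^ 2) := by
      funext ω; rw [hDGP ω]; ring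
    have hc2 : Integrable (fun ω => 2 * ((f (XS ω, XC ω) - f (XtS ω, XC ω)) * ε ω)) P :=
      hcrossInt.const_mul 2
    have hsum : Integrable (fun ω => 2 * ((f (XS ω, XC ω) - f (XtS ω, XC ω)) * ε ω)
        + ε ω ^ 2) P := hc2.add hεsq
    rw [he, integral_add hgsq hsum, integral_add hc2 hεsq,
      integral_const_mul, hcross0, mul_zero, zero_add]
  -- main split of the double integral
  have hsplit : ∫ p : Ω × ΩF, ((Y p.1 - fhat (p.2, (XtS p.1, XC p.1))) ^ 2
        - (Y p.1 - fhat (p.2, (XS p.1, XC p.1))) ^ 2) ∂(P.prod PF)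
      = (∫ p : Ω × ΩF, (Y p.1 - fhat (p.2, (XtS p.1, XC p.1))) ^ 2 ∂(P.prod PF))
        - ∫ p : Ω × ΩF, (Y p.1 - fhat (p.2, (XS p.1, XC p.1))) ^ 2 ∂(P.prod PF) :=
    integral_sub hIntPerm hIntOrig
  have part1 : (∫ p : Ω × ΩF, ((Y p.1 - fhat (p.2, (XtS p.1, XC p.1))) ^ 2
          - (Y p.1 - fhat (p.2, (XS p.1, XC p.1))) ^ 2) ∂(P.prod PF))
        - (∫ ω, (f (XS ω, XC ω) - f (XtS ω, XC ω)) ^ 2 ∂P)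
      = (∫ ω, v (XtS ω, XC ω) ∂P) - ∫ ω, v (XS ω, XC ω) ∂P := by
    rw [hsplit, hPerm, hOrig, hexp]; ring
  refine ⟨part1, fun hmap => ?_⟩
  -- measurability of v
  have hmsm : StronglyMeasurable m := by
    rw [show m = fun x => ∫ ωF, fhat (ωF, x) ∂PF from funext hm]
    exact hfhat.stronglyMeasurable.integral_prod_left'
  have hq : StronglyMeasurable (fun p : ΩF × (S × C) => (fhat p - m p.2) ^ 2) :=
    ((hfhat.stronglyMeasurable.sub (hmsm.comp_measurable measurable_snd)).pow 2)
  have hvm : StronglyMeasurable v := by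
    rw [show v = fun x => ∫ ωF, (fhat (ωF, x) - m x) ^ 2 ∂PF from funext hv]
    exact hq.integral_prod_left'
  have hveq : ∫ ω, v (XtS ω, XC ω) ∂P = ∫ ω, v (XS ω, XC ω) ∂P := by
    rw [← integral_map (hXtS.prodMk hXC).aemeasurable hvm.aestronglyMeasurable,
      ← integral_map (hXS.prodMk hXC).aemeasurable hvm.aestronglyMeasurable, hmap]
  linarith [part1, hveq]
end
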